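/- Let C be a reduced curve on a smooth projective surface whose singularities all have the same multiplicity m ≥ 2 and are ordinary, with s = #Sing(C) ≥ 1. Then H(C, Sing(C)) = C²/s − m², and the Harbourne constant of C equals min(−1, C² − m², C²/s − m²). -/
import Mathlib


/-- Let `C` be a reduced curve whose singularities are ordinary, all of the same
multiplicity `m ≥ 2`, with `s ≥ 1` singular points.  Blowing up `a ≤ s` of the
singular points, `b` further smooth points of `C` and `c` points off `C` gives
the Harbourne quotient `(C² − a m² − b)/(a+b+c)`.  Then
`H(C, Sing C) = C²/s − m²` and the Harbourne constant of `C` (the infimum of all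
these quotients) equals `min(−1, C² − m², C²/s − m²)`. -/
theorem harbourne_constant_equimultiple (C2 : ℤ) (m s : ℕ)
    (hm : 2 ≤ m) (hs : 1 ≤ s) :
    ((C2 : ℝ) - (s : ℝ) * (m : ℝ) ^ 2) / (s : ℝ) = (C2 : ℝ) / (s : ℝ) - (m : ℝ) ^ 2 ∧
    IsGLB {h : ℝ | ∃ a b c : ℕ, a ≤ s ∧ 0 < a + b + c ∧
        h = ((C2 : ℝ) - (a : ℝ) * (m : ℝ) ^ 2 - (b : ℝ)) / ((a : ℝ) + (b : ℝ) + (c : ℝ))}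
      (min (-1) (min ((C2 : ℝ) - (m : ℝ) ^ 2) ((C2 : ℝ) / (s : ℝ) - (m : ℝ) ^ 2))) := by
  have hm' : (2:ℝ) ≤ (m:ℝ) := by exact_mod_cast hm
  have hs' : (1:ℝ) ≤ (s:ℝ) := by exact_mod_cast hs
  have hs0 : (0:ℝ) < (s:ℝ) := by linarith
  have hfirst : ((C2 : ℝ) - (s : ℝ) * (m : ℝ) ^ 2) / (s : ℝ)
      = (C2 : ℝ) / (s : ℝ) - (m : ℝ) ^ 2 := by
    field_simp
  refine ⟨hfirst, ?_, ?_⟩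
  · -- lower bound
    rintro h ⟨a, b, c, ha, hpos, rfl⟩
    set L := min (-1 : ℝ) (min ((C2:ℝ) - (m:ℝ)^2) ((C2:ℝ)/(s:ℝ) - (m:ℝ)^2)) with hLdef
    have hL1 : L ≤ -1 := min_le_left _ _
    have hL2 : L ≤ (C2:ℝ) - (m:ℝ)^2 := le_trans (min_le_right _ _) (min_le_left _ _)
    have hL3 : L ≤ (C2:ℝ)/(s:ℝ) - (m:ℝ)^2 := le_trans (min_le_right _ _) (min_le_right _ _)
    have hC2s : (s:ℝ) * ((m:ℝ)^2 + L) ≤ (C2:ℝ) := by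
      have : (m:ℝ)^2 + L ≤ (C2:ℝ)/(s:ℝ) := by linarith
      calc (s:ℝ) * ((m:ℝ)^2 + L) ≤ (s:ℝ) * ((C2:ℝ)/(s:ℝ)) :=
            mul_le_mul_of_nonneg_left this (le_of_lt hs0)
        _ = (C2:ℝ) := by field_simp
    have ha' : (a:ℝ) ≤ (s:ℝ) := by exact_mod_cast ha
    have hb0 : (0:ℝ) ≤ (b:ℝ) := Nat.cast_nonneg b
    have hc0 : (0:ℝ) ≤ (c:ℝ) := Nat.cast_nonneg c
    have ha0 : (0:ℝ) ≤ (a:ℝ) := Nat.cast_nonneg a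
    have hN : (0:ℝ) < (a:ℝ) + (b:ℝ) + (c:ℝ) := by
      have : (0:ℝ) < ((a + b + c : ℕ) : ℝ) := by exact_mod_cast hpos
      push_cast at this; linarith
    rw [le_div_iff₀ hN]
    -- goal : L * (a+b+c) ≤ C2 - a m² - b
    rcases le_or_gt 0 ((m:ℝ)^2 + L) with hsign | hsign
    · have h1 : (a:ℝ) * ((m:ℝ)^2 + L) ≤ (s:ℝ) * ((m:ℝ)^2 + L) :=
        mul_le_mul_of_nonneg_right ha' hsign
      nlinarith [mul_nonneg hb0 (by linarith : (0:ℝ) ≤ -(L+1)),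
        mul_nonneg hc0 (by linarith : (0:ℝ) ≤ -L)]
    · rcases Nat.eq_zero_or_pos a with haz | hap
      · subst haz
        have hbc : 1 ≤ b + c := by omega
        have hbc' : (1:ℝ) ≤ (b:ℝ) + (c:ℝ) := by exact_mod_cast hbc
        have h2 : ((b:ℝ) + (c:ℝ)) * (L + 1) ≤ 1 * (L + 1) :=
          mul_le_mul_of_nonpos_right hbc' (by linarith)
        nlinarith [mul_nonneg hc0 (by norm_num : (0:ℝ) ≤ 1)]
      · have hap' : (1:ℝ) ≤ (a:ℝ) := by exact_mod_cast hap
        have h3 : (a:ℝ) * ((m:ℝ)^2 + L) ≤ 1 * ((m:ℝ)^2 + L) :=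
          mul_le_mul_of_nonpos_right hap' (le_of_lt hsign)
        nlinarith [mul_nonneg hb0 (by linarith : (0:ℝ) ≤ -(L+1)),
          mul_nonneg hc0 (by linarith : (0:ℝ) ≤ -L)]
  · -- greatest lower bound
    intro B hB
    refine le_min ?_ (le_min ?_ ?_)
    · -- B ≤ -1
      by_contra hcon
      push_neg at hcon
      have hB1 : 0 < B + 1 := by linarith
      obtain ⟨n, hn⟩ := exists_nat_gt (max 1 ((C2:ℝ) / (B + 1)))
      have hn1 : (1:ℝ) < (n:ℝ) := lt_of_le_of_lt (le_max_left _ _) hn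
      have hn0 : (0:ℝ) < (n:ℝ) := by linarith
      have hn1' : 1 ≤ n := by exact_mod_cast hn1.le
      have hmem : ((C2:ℝ) - (0:ℝ) * (m:ℝ)^2 - (n:ℝ)) / ((0:ℝ) + (n:ℝ) + (0:ℝ)) ∈
          {h : ℝ | ∃ a b c : ℕ, a ≤ s ∧ 0 < a + b + c ∧
            h = ((C2 : ℝ) - (a : ℝ) * (m : ℝ) ^ 2 - (b : ℝ)) / ((a : ℝ) + (b : ℝ) + (c : ℝ))} := by
        exact ⟨0, n, 0, Nat.zero_le s, by omega, by push_cast; norm_num⟩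
      have hle := hB hmem
      have h4 : B * (n:ℝ) ≤ (C2:ℝ) - (n:ℝ) := by
        have := (le_div_iff₀ hn0).mp (by simpa using hle)
        linarith
      have h5 : (C2:ℝ) / (B + 1) < (n:ℝ) := lt_of_le_of_lt (le_max_right _ _) hn
      have h6 : (C2:ℝ) < (B + 1) * (n:ℝ) := by
        have := (div_lt_iff₀ hB1).mp h5
        linarith
      nlinarith
    · -- B ≤ C2 - m²
      have hmem : ((C2:ℝ) - (1:ℝ) * (m:ℝ)^2 - (0:ℝ)) / ((1:ℝ) + (0:ℝ) + (0:ℝ)) ∈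
          {h : ℝ | ∃ a b c : ℕ, a ≤ s ∧ 0 < a + b + c ∧
            h = ((C2 : ℝ) - (a : ℝ) * (m : ℝ) ^ 2 - (b : ℝ)) / ((a : ℝ) + (b : ℝ) + (c : ℝ))} := by
        exact ⟨1, 0, 0, hs, by omega, by push_cast; norm_num⟩
      have := hB hmem
      simpa using this
    · -- B ≤ C2/s - m²
      have hmem : ((C2:ℝ) - (s:ℝ) * (m:ℝ)^2 - (0:ℝ)) / ((s:ℝ) + (0:ℝ) + (0:ℝ)) ∈
          {h : ℝ | ∃ a b c : ℕ, a ≤ s ∧ 0 < a + b + c ∧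
            h = ((C2 : ℝ) - (a : ℝ) * (m : ℝ) ^ 2 - (b : ℝ)) / ((a : ℝ) + (b : ℝ) + (c : ℝ))} := by
        exact ⟨s, 0, 0, le_refl s, by omega, by push_cast; norm_num⟩
      have := hB hmem
      rw [← hfirst]
      simpa using this
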